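/- Let G = (V,E) be a finite connected graph with symmetric irreflexive edge relation, let T ⊆ V be nonempty, and let φ and φ* be flows on G satisfying flow conservation for the injections q : V → ℝ and q* : V → ℝ respectively. If q_i ≥ q*_i for all i ∈ V \ T, and u ∈ V \ T satisfies the strict inequality q_u > q*_u, then there exists a directed path {i_1, …, i_n} of pairwise distinct vertices with i_1 ∈ T, i_n = u, and the strict inequality φ*_{i_l i_{l+1}} > φ_{i_l i_{l+1}} for every 1 ≤ l ≤ n−1. -/

import Mathlib

open Finset

/-- **Aquarius Theorem** (strict inequalities): in a finite connected graph with a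
symmetric irreflexive edge relation, if two conserved flows `φ`, `φs` have
injections `q ≥ qs` outside a nonempty set `T`, and `u ∉ T` satisfies the strict
inequality `q u > qs u`, then there is a directed path of pairwise distinct
vertices from some node of `T` to `u` along which `φs > φ` edgewise strictly. -/
theorem aquarius_theorem_strict
    {V : Type*} [Fintype V] [DecidableEq V] [Nonempty V]
    (E : V → V → Prop) [DecidableRel E]
    (hsymm : ∀ i j, E i j → E j i)
    (hirrefl : ∀ i, ¬ E i i)
    (hconn : ∀ u v : V, Relation.ReflTransGen E u v)
    (T : Finset V) (hT : T.Nonempty)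
    (φ φs : V → V → ℝ)
    (hskew : ∀ i j, E i j → φ i j = - φ j i)
    (hskews : ∀ i j, E i j → φs i j = - φs j i)
    (q qs : V → ℝ)
    (hcons : ∀ i : V, (∑ j ∈ univ.filter (fun j => E j i), φ j i) + q i = 0)
    (hconss : ∀ i : V, (∑ j ∈ univ.filter (fun j => E j i), φs j i) + qs i = 0)
    (hq : ∀ i : V, i ∉ T → q i ≥ qs i) :
    ∀ u : V, u ∉ T → q u > qs u →
      ∃ (n : ℕ) (p : Fin (n + 1) → V),
        Function.Injective p ∧
        p 0 ∈ T ∧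
        p (Fin.last n) = u ∧
        (∀ l : Fin n, E (p l.castSucc) (p l.succ)) ∧
        (∀ l : Fin n, φs (p l.castSucc) (p l.succ) > φ (p l.castSucc) (p l.succ)) := by
  classical
  intro u hu hqu
  set ψ : V → V → ℝ := fun i j => φs i j - φ i j with hψ
  have hψskew : ∀ i j, E i j → ψ i j = -ψ j i := by
    intro i j h
    simp only [hψ, hskew i j h, hskews i j h]
    ring
  set step : V → V → Prop := fun a b => E a b ∧ 0 < ψ a b with hstepdef
  set Reach : V → Prop := fun v =>
    ∃ l : List V, l.Nodup ∧ l.head? = some v ∧ l.getLast? = some u ∧ l.Chain' step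
    with hReachdef
  have hReach_u : Reach u := ⟨[u], by simp, rfl, by simp, List.isChain_singleton _⟩
  have hstep : ∀ v j, Reach v → step j v → Reach j := by
    rintro v j ⟨l, hnd, hhd, hlast, hch⟩ hs
    by_cases hj : j ∈ l
    · obtain ⟨l₁, l₂, rfl⟩ := List.append_of_mem hj
      refine ⟨j :: l₂, ?_, rfl, ?_, ?_⟩
      · exact (List.sublist_append_right l₁ (j :: l₂)).nodup hnd
      · rw [← hlast, List.getLast?_append,
          List.getLast?_eq_getLast (l := j :: l₂) (by simp)]; rfl
      · exact hch.suffix ⟨l₁, rfl⟩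
    · cases l with
      | nil => simp at hhd
      | cons a t =>
        have hav : a = v := by simpa using hhd
        refine ⟨j :: a :: t, ?_, rfl, ?_, ?_⟩
        · exact List.nodup_cons.mpr ⟨hj, hnd⟩
        · rw [← hlast]; simp [List.getLast?]
        · exact List.isChain_cons_cons.mpr ⟨hav ▸ hs, hch⟩
  have hflow : ∀ i, ∑ j ∈ univ.filter (fun j => E j i), ψ j i = q i - qs i := by
    intro i
    have h1 := hcons i
    have h2 := hconss i
    have h3 : ∑ j ∈ univ.filter (fun j => E j i), ψ j i
        = (∑ j ∈ univ.filter (fun j => E j i), φs j i)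
          - ∑ j ∈ univ.filter (fun j => E j i), φ j i := by
      rw [← Finset.sum_sub_distrib]
    rw [h3]; linarith
  -- main claim: some vertex of T reaches u
  have hTS : ∃ t, t ∈ T ∧ Reach t := by
    by_contra hcon
    push_neg at hcon
    have hSnotT : ∀ i, Reach i → i ∉ T := fun i hi hiT => hcon i hiT hi
    set S : Finset V := univ.filter (fun v => Reach v) with hSdef
    have hmemS : ∀ v, v ∈ S ↔ Reach v := by intro v; simp [hSdef]
    set g : V → V → ℝ := fun i j => if E i j then ψ i j else 0 with hgdef
    have hg : ∀ i j, g i j = - g j i := by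
      intro i j
      by_cases h : E i j
      · simp [hgdef, h, hsymm i j h, hψskew i j h]
      · have h' : ¬ E j i := fun hh => h (hsymm _ _ hh)
        simp [hgdef, h, h']
    have hpos : 0 < ∑ i ∈ S, (q i - qs i) := by
      refine Finset.sum_pos' ?_ ⟨u, (hmemS u).mpr hReach_u, by linarith⟩
      intro i hi
      have := hq i (hSnotT i ((hmemS i).mp hi))
      linarith
    have heq1 : ∑ i ∈ S, (q i - qs i)
        = ∑ i ∈ S, ((∑ j ∈ S, g j i) + ∑ j ∈ Sᶜ, g j i) := by
      refine Finset.sum_congr rfl ?_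
      intro i _
      rw [Finset.sum_add_sum_compl S (fun j => g j i), ← hflow i,
        Finset.sum_filter]
    have hA : ∑ i ∈ S, ∑ j ∈ S, g j i = 0 := by
      have h1 : ∑ i ∈ S, ∑ j ∈ S, g j i = ∑ j ∈ S, ∑ i ∈ S, g j i :=
        Finset.sum_comm
      have h2 : ∑ j ∈ S, ∑ i ∈ S, g j i = - ∑ j ∈ S, ∑ i ∈ S, g i j := by
        rw [← Finset.sum_neg_distrib]
        refine Finset.sum_congr rfl fun j _ => ?_
        rw [← Finset.sum_neg_distrib]
        exact Finset.sum_congr rfl fun i _ => hg j i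
      have h3 : ∑ j ∈ S, ∑ i ∈ S, g i j = ∑ i ∈ S, ∑ j ∈ S, g j i := rfl
      linarith [h1, h2, h3]
    have hB : ∑ i ∈ S, ∑ j ∈ Sᶜ, g j i ≤ 0 := by
      refine Finset.sum_nonpos fun i hi => Finset.sum_nonpos fun j hj => ?_
      have hiR : Reach i := (hmemS i).mp hi
      have hjR : ¬ Reach j := by
        intro h
        exact (Finset.mem_compl.mp hj) ((hmemS j).mpr h)
      by_cases h : E j i
      · simp only [hgdef, if_pos h]
        by_contra hlt
        push_neg at hlt
        exact hjR (hstep i j hiR ⟨h, hlt⟩)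
      · simp [hgdef, h]
    rw [heq1, Finset.sum_add_distrib, hA, zero_add] at hpos
    linarith
  obtain ⟨t, htT, l, hnd, hhd, hlast, hch⟩ := hTS
  cases l with
  | nil => simp at hhd
  | cons a tl =>
    have hat : a = t := by simpa using hhd
    refine ⟨tl.length, fun i => (a :: tl).get i, ?_, ?_, ?_, ?_, ?_⟩
    · exact List.nodup_iff_injective_get.mp hnd
    · simpa [hat] using htT
    · have hne : (a :: tl) ≠ [] := by simp
      have := List.getLast?_eq_getLast (l := a :: tl) hne
      rw [this] at hlast
      have hu' : (a :: tl).getLast hne = u := by simpa using hlast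
      rw [← hu', List.getLast_eq_getElem]
      rfl
    · intro i
      have := List.isChain_iff_getElem.mp hch i.val (by simpa using i.isLt)
      exact this.1
    · intro i
      have := (List.isChain_iff_getElem.mp hch i.val (by simpa using i.isLt)).2
      simp only [hψ] at this
      exact sub_pos.mp this
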